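/- Let g be a multiplicative read-once polynomial (an ROP computed by a read-once formula with no addition gates) depending on at least 2 variables over a field F. Then for every variable xi of g, there exist a variable xj of g with j ≠ i and a constant γ ∈ F such that ∂_{xj}(g)|_{xi=γ} = 0. -/

import Mathlib

open MvPolynomial

/-- Substitute the constant `a` for variable `i`. -/
noncomputable def rst {F : Type*} [Field F] {n : ℕ} (i : Fin n) (a : F)
    (p : MvPolynomial (Fin n) F) : MvPolynomial (Fin n) F :=
  aeval (fun k : Fin n => if k = i then (C a : MvPolynomial (Fin n) F) else X k) p

/-- Partial derivative of a multilinear polynomial: p|_{xi=1} - p|_{xi=0}. -/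
noncomputable def pder {F : Type*} [Field F] {n : ℕ} (i : Fin n)
    (p : MvPolynomial (Fin n) F) : MvPolynomial (Fin n) F :=
  rst i 1 p - rst i 0 p

/-- Multiplicative read-once polynomials. -/
inductive IsMulROP {F : Type*} [Field F] {n : ℕ} : MvPolynomial (Fin n) F → Prop
  | leaf (a b : F) (ha : a ≠ 0) (i : Fin n) : IsMulROP (C a * X i + C b)
  | mul (a b : F) (ha : a ≠ 0) {f g : MvPolynomial (Fin n) F} (hdisj : Disjoint f.vars g.vars)
      (hf : IsMulROP f) (hg : IsMulROP g) : IsMulROP (C a * (f * g) + C b)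

section Aux

variable {F : Type*} [Field F] {n : ℕ}

lemma rst_mul (i : Fin n) (a : F) (p q : MvPolynomial (Fin n) F) :
    rst i a (p * q) = rst i a p * rst i a q := map_mul _ _ _

lemma rst_add (i : Fin n) (a : F) (p q : MvPolynomial (Fin n) F) :
    rst i a (p + q) = rst i a p + rst i a q := map_add _ _ _

lemma rst_C (i : Fin n) (a b : F) : rst i a (C b : MvPolynomial (Fin n) F) = C b := by
  simp [rst]

lemma rst_X_self (i : Fin n) (a : F) : rst i a (X i : MvPolynomial (Fin n) F) = C a := by
  simp [rst]

lemma rst_X_ne {i j : Fin n} (a : F) (h : j ≠ i) :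
    rst i a (X j : MvPolynomial (Fin n) F) = X j := by
  simp [rst, h]

lemma rst_eq_self {i : Fin n} {a : F} {p : MvPolynomial (Fin n) F} (h : i ∉ p.vars) :
    rst i a p = p := by
  rw [rst, aeval_def, ← coe_eval₂Hom]
  have h1 : eval₂Hom (algebraMap F (MvPolynomial (Fin n) F))
      (fun k : Fin n => if k = i then (C a : MvPolynomial (Fin n) F) else X k) p
      = eval₂Hom (algebraMap F (MvPolynomial (Fin n) F)) X p := by
    refine eval₂Hom_congr' rfl (fun k hk _ => ?_) rfl
    have : k ≠ i := fun e => h (e ▸ hk)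
    simp [this]
  have h2 := aeval_X_left_apply (R := F) p
  rw [aeval_def, ← coe_eval₂Hom] at h2
  rw [h1, h2]

lemma vars_add_C (p : MvPolynomial (Fin n) F) (b : F) : (p + C b).vars = p.vars := by
  rw [vars_add_of_disjoint (by simp [vars_C]), vars_C, Finset.union_empty]

lemma vars_affine {a : F} (ha : a ≠ 0) (b : F) (p : MvPolynomial (Fin n) F) :
    (C a * p + C b).vars = p.vars := by
  rw [vars_add_C, vars_C_mul a ha]

lemma vars_leaf {a : F} (ha : a ≠ 0) (b : F) (i : Fin n) :
    (C a * X i + C b : MvPolynomial (Fin n) F).vars = {i} := by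
  rw [vars_affine ha, vars_X]

lemma eval_congr_vars {x y : Fin n → F} {p : MvPolynomial (Fin n) F}
    (h : ∀ k ∈ p.vars, x k = y k) : eval x p = eval y p := by
  have : eval₂Hom (RingHom.id F) x p = eval₂Hom (RingHom.id F) y p :=
    eval₂Hom_congr' rfl (fun k hk _ => h k hk) rfl
  simpa using this

lemma vars_aeval_subset (s : Fin n → MvPolynomial (Fin n) F)
    (hs : ∀ k, s k = X k ∨ ∃ c : F, s k = C c) (p : MvPolynomial (Fin n) F) :
    (aeval s p).vars ⊆ p.vars := by
  have : aeval s p = bind₁ s p := rfl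
  rw [this]
  refine (vars_bind₁ s p).trans ?_
  intro j hj
  rw [Finset.mem_biUnion] at hj
  obtain ⟨k, hk, hjk⟩ := hj
  rcases hs k with h | ⟨c, h⟩
  · rw [h, vars_X] at hjk
    simpa using (Finset.mem_singleton.mp hjk) ▸ hk
  · rw [h, vars_C] at hjk; simp at hjk

lemma aeval_eq_C_eval (x : Fin n → F) (s : Fin n → MvPolynomial (Fin n) F)
    (p : MvPolynomial (Fin n) F) (h : ∀ k ∈ p.vars, s k = C (x k)) :
    aeval s p = C (eval x p) := by
  have : (aeval s).toRingHom p = ((C : F →+* MvPolynomial (Fin n) F).comp (eval x)) p := by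
    refine hom_congr_vars ?_ (fun k hk _ => ?_) rfl
    · ext r; simp [algebraMap_eq]
    · simp [h k hk]
  simpa using this

lemma aeval_eq_self (s : Fin n → MvPolynomial (Fin n) F)
    (p : MvPolynomial (Fin n) F) (h : ∀ k ∈ p.vars, s k = X k) :
    aeval s p = p := by
  have h1 : eval₂Hom (algebraMap F (MvPolynomial (Fin n) F)) s p
      = eval₂Hom (algebraMap F (MvPolynomial (Fin n) F)) X p :=
    eval₂Hom_congr' rfl (fun k hk _ => h k hk) rfl
  have h2 := aeval_X_left_apply (R := F) p
  rw [aeval_def, ← coe_eval₂Hom] at h2 ⊢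
  rw [h1, h2]

/-- A multiplicative ROP attains every value. -/
lemma IsMulROP.eval_surj {p : MvPolynomial (Fin n) F} (hp : IsMulROP p) (t : F) :
    ∃ x : Fin n → F, eval x p = t := by
  induction hp generalizing t with
  | leaf a b ha i =>
      exact ⟨fun _ => (t - b) / a, by simp only [map_add, map_mul, eval_C, eval_X]; field_simp; ring⟩
  | @mul a b ha f g hdisj hf hg ihf ihg =>
      classical
      obtain ⟨x1, hx1⟩ := ihf 1
      obtain ⟨x2, hx2⟩ := ihg ((t - b) / a)
      refine ⟨fun k => if k ∈ f.vars then x1 k else x2 k, ?_⟩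
      have e1 : eval (fun k => if k ∈ f.vars then x1 k else x2 k) f = 1 := by
        rw [← hx1]; exact eval_congr_vars fun k hk => by simp [hk]
      have e2 : eval (fun k => if k ∈ f.vars then x1 k else x2 k) g = (t - b) / a := by
        rw [← hx2]
        exact eval_congr_vars fun k hk => by
          simp [Finset.disjoint_right.mp hdisj hk]
      simp only [map_add, map_mul, eval_C, e1, e2]
      field_simp
      ring

lemma vars_mul_subset' {f g : MvPolynomial (Fin n) F} (hg : IsMulROP g)
    (hdisj : Disjoint f.vars g.vars) : f.vars ⊆ (f * g).vars := by
  classical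
  obtain ⟨x, hx⟩ := hg.eval_surj 1
  set s : Fin n → MvPolynomial (Fin n) F :=
    fun k => if k ∈ g.vars then C (x k) else X k with hs
  have hsf : aeval s f = f := aeval_eq_self s f fun k hk => by
    simp [hs, Finset.disjoint_left.mp hdisj hk]
  have hsg : aeval s g = C 1 := by
    rw [aeval_eq_C_eval x s g fun k hk => by simp [hs, hk], hx]
  have key : aeval s (f * g) = f := by
    rw [map_mul, hsf, hsg, map_one, mul_one]
  calc f.vars = (aeval s (f * g)).vars := by rw [key]
    _ ⊆ (f * g).vars := vars_aeval_subset s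
        (fun k => by by_cases h : k ∈ g.vars <;> simp [hs, h]) _

lemma vars_node {a : F} (ha : a ≠ 0) (b : F) {f g : MvPolynomial (Fin n) F}
    (hf : IsMulROP f) (hg : IsMulROP g) (hdisj : Disjoint f.vars g.vars) :
    (C a * (f * g) + C b).vars = f.vars ∪ g.vars := by
  rw [vars_affine ha]
  refine le_antisymm (vars_mul f g) ?_
  refine Finset.union_subset (vars_mul_subset' hg hdisj) ?_
  have := vars_mul_subset' hf hdisj.symm
  rwa [mul_comm] at this

lemma IsMulROP.vars_nonempty {p : MvPolynomial (Fin n) F} (hp : IsMulROP p) :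
    p.vars.Nonempty := by
  induction hp with
  | leaf a b ha i => rw [vars_leaf ha]; exact ⟨i, Finset.mem_singleton_self i⟩
  | @mul a b ha f g hdisj hf hg ihf ihg =>
      rw [vars_node ha b hf hg hdisj]
      exact ihf.mono Finset.subset_union_left

/-- pder of a node when `j` is not a variable of `g`. -/
lemma pder_node {a b : F} {f g : MvPolynomial (Fin n) F} {j : Fin n} (hj : j ∉ g.vars) :
    pder j (C a * (f * g) + C b) = C a * (pder j f * g) := by
  simp only [pder, rst_add, rst_mul, rst_C, rst_eq_self hj]
  ring

/-- Main induction. -/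
lemma key_aux {a : F} (b : F) (ha : a ≠ 0) {f g : MvPolynomial (Fin n) F}
    (hf : IsMulROP f) (hg : IsMulROP g) (hdisj : Disjoint f.vars g.vars)
    {i : Fin n} (hif : i ∈ f.vars)
    (ih : (∃ j ∈ f.vars, j ≠ i ∧ ∃ γ : F, rst i γ (pder j f) = 0) ∨
      ∃ a' b' : F, a' ≠ 0 ∧ f = C a' * X i + C b') :
    ∃ j ∈ (C a * (f * g) + C b).vars, j ≠ i ∧
      ∃ γ : F, rst i γ (pder j (C a * (f * g) + C b)) = 0 := by
  rw [vars_node ha b hf hg hdisj]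
  rcases ih with ⟨j, hjf, hji, γ, h0⟩ | ⟨a', b', ha', hfeq⟩
  · refine ⟨j, Finset.mem_union_left _ hjf, hji, γ, ?_⟩
    rw [pder_node (Finset.disjoint_left.mp hdisj hjf), rst_mul, rst_mul, rst_C, h0,
      zero_mul, mul_zero]
  · obtain ⟨j, hjg⟩ := hg.vars_nonempty
    have hig : i ∉ g.vars := Finset.disjoint_left.mp hdisj hif
    have hji : j ≠ i := fun e => hig (e ▸ hjg)
    refine ⟨j, Finset.mem_union_right _ hjg, hji, -(b' / a'), ?_⟩
    have hjf : j ∉ f.vars := Finset.disjoint_right.mp hdisj hjg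
    have hp : pder j (C a * (f * g) + C b) = C a * (f * pder j g) := by
      simp only [pder, rst_add, rst_mul, rst_C, rst_eq_self hjf]
      ring
    have hrf : rst i (-(b' / a')) f = 0 := by
      rw [hfeq, rst_add, rst_mul, rst_C, rst_C, rst_X_self, ← map_mul, ← map_add]
      rw [show a' * -(b' / a') + b' = 0 by field_simp; ring, map_zero]
    rw [hp, rst_mul, rst_mul, rst_C, hrf, zero_mul, mul_zero]

lemma key {p : MvPolynomial (Fin n) F} (hp : IsMulROP p) {i : Fin n} (hi : i ∈ p.vars) :
    (∃ j ∈ p.vars, j ≠ i ∧ ∃ γ : F, rst i γ (pder j p) = 0) ∨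
      ∃ a b : F, a ≠ 0 ∧ p = C a * X i + C b := by
  induction hp with
  | leaf a b ha k =>
      rw [vars_leaf ha, Finset.mem_singleton] at hi
      exact Or.inr ⟨a, b, ha, by rw [hi]⟩
  | @mul a b ha f g hdisj hf hg ihf ihg =>
      rw [vars_node ha b hf hg hdisj, Finset.mem_union] at hi
      rcases hi with hif | hig
      · exact Or.inl (key_aux b ha hf hg hdisj hif (ihf hif))
      · left
        have := key_aux b ha hg hf hdisj.symm hig (ihg hig)
        rwa [mul_comm g f] at this

end Aux

theorem stmt13 {F : Type*} [Field F] {n : ℕ} (g : MvPolynomial (Fin n) F)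
    (hg : IsMulROP g) (hvars : 2 ≤ g.vars.card) (i : Fin n) (hi : i ∈ g.vars) :
    ∃ j ∈ g.vars, j ≠ i ∧ ∃ γ : F, rst i γ (pder j g) = 0 := by
  rcases key hg hi with h | ⟨a, b, ha, rfl⟩
  · exact h
  · rw [vars_leaf ha, Finset.card_singleton] at hvars
    omega
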